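/- Under the binary-distance model with C_P poisoned concepts (each replacing m of its n samples with poison from a distinct unpoisoned target concept), the structure AD term ((1-α)/N²)·Σ_{i,k} |D_img(x_i,x_k) - D_txt(y_i,y_k)| is bounded below by (2(1-α)·m·(n-m)/N² + 2(1-α)·m·(n-m)/N²)·C_P, i.e., by 4(1-α)·m·(n-m)·C_P/N². -/

import Mathlib

open Finset

/-- With C_P poisoned concepts (each replacing m of its n samples with poison from a
distinct unpoisoned target concept), the structure AD term is at least
4(1-α)·m·(n-m)·C_P/N². -/
theorem stmt_2 (C n m CP : ℕ) (hn : 0 < n) (hm : 0 < m) (hmn : m < n)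
    (N : ℕ) (hN : N = C * n) (hNpos : 0 < N)
    (α : ℝ) (hα0 : 0 ≤ α) (hα1 : α ≤ 1)
    (imgC txtC : Fin N → Fin C)
    (P : Finset (Fin C)) (hP : P.card = CP)
    (t : Fin C → Fin C)
    (ht_inj : Set.InjOn t P) (ht_ne : ∀ p ∈ P, t p ≠ p) (ht_out : ∀ p ∈ P, t p ∉ P)
    (hcount : ∀ c : Fin C, (Finset.univ.filter (fun i => txtC i = c)).card = n)
    (hpois : ∀ p ∈ P,
      (Finset.univ.filter (fun i => txtC i = p ∧ imgC i = t p)).card = m)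
    (hshape : ∀ i : Fin N, txtC i ∈ P → imgC i = txtC i ∨ imgC i = t (txtC i))
    (hclean : ∀ i : Fin N, txtC i ∉ P → imgC i = txtC i) :
    ((1 - α) / (N:ℝ)^2) *
        ∑ i : Fin N, ∑ k : Fin N,
          |(if imgC i = imgC k then (0:ℝ) else 1) -
            (if txtC i = txtC k then (0:ℝ) else 1)|
      ≥ 4 * (1 - α) * (m:ℝ) * ((n - m : ℕ):ℝ) * (CP:ℝ) / (N:ℝ)^2 := by
  classical
  set g : Fin N → Fin N → ℝ := fun i k =>
    |(if imgC i = imgC k then (0:ℝ) else 1) -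
      (if txtC i = txtC k then (0:ℝ) else 1)| with hg
  have gnonneg : ∀ i k, 0 ≤ g i k := by
    intro i k; simp only [hg]; exact abs_nonneg _
  have gsymm : ∀ i k, g i k = g k i := by
    intro i k
    have h1 : (imgC i = imgC k) = (imgC k = imgC i) := by simp [eq_comm]
    have h2 : (txtC i = txtC k) = (txtC k = txtC i) := by simp [eq_comm]
    simp only [hg, h1, h2]
  set Q : Fin N → Fin N → Prop := fun i k =>
    txtC i ∈ P ∧ imgC i = t (txtC i) ∧
      ((txtC k = txtC i ∧ imgC k = txtC i) ∨ txtC k = t (txtC i)) with hQ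
  have gone : ∀ i k, Q i k → g i k = 1 := by
    rintro i k ⟨hp, hi, ⟨hk1, hk2⟩ | hk⟩
    · have hne : imgC i ≠ imgC k := by
        rw [hi, hk2]; intro h; exact ht_ne _ hp h
      simp only [hg]
      rw [if_neg hne, if_pos hk1.symm]
      norm_num
    · have h1 : txtC i ≠ txtC k := by
        rw [hk]; intro h; exact ht_ne _ hp h.symm
      have h2 : imgC k = txtC k := hclean k (by rw [hk]; exact ht_out _ hp)
      have h3 : imgC i = imgC k := by rw [hi, h2, hk]
      simp only [hg]
      rw [if_pos h3, if_neg h1]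
      norm_num
  have hGcard : ∀ p ∈ P,
      (univ.filter (fun i => txtC i = p ∧ imgC i = p)).card = n - m := by
    intro p hp
    have h1 : (univ.filter (fun i : Fin N => txtC i = p)) =
        univ.filter (fun i => txtC i = p ∧ imgC i = p) ∪
        univ.filter (fun i => txtC i = p ∧ imgC i = t p) := by
      ext i
      simp only [mem_filter, mem_union, mem_univ, true_and]
      constructor
      · intro h
        rcases hshape i (by rw [h]; exact hp) with h2 | h2
        · exact Or.inl ⟨h, by rw [h2, h]⟩
        · exact Or.inr ⟨h, by rw [h2, h]⟩
      · rintro (⟨h, _⟩ | ⟨h, _⟩) <;> exact h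
    have hdisj : Disjoint (univ.filter (fun i : Fin N => txtC i = p ∧ imgC i = p))
        (univ.filter (fun i : Fin N => txtC i = p ∧ imgC i = t p)) := by
      rw [Finset.disjoint_left]
      intro i hi1 hi2
      simp only [mem_filter] at hi1 hi2
      exact ht_ne p hp (hi2.2.2.symm.trans hi1.2.2)
    have hc := hcount p
    rw [h1, card_union_of_disjoint hdisj, hpois p hp] at hc
    omega
  have hBcard : ∀ p ∈ P,
      (univ.filter (fun k => (txtC k = p ∧ imgC k = p) ∨ txtC k = t p)).card
        = (n - m) + n := by
    intro p hp
    rw [filter_or, card_union_of_disjoint]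
    · rw [hGcard p hp, hcount (t p)]
    · rw [Finset.disjoint_left]
      intro k h1 h2
      simp only [mem_filter] at h1 h2
      exact ht_ne p hp (h1.2.1.symm.trans h2.2).symm
  set T1 : Finset (Fin N × Fin N) :=
    P.biUnion (fun p => (univ.filter (fun i => txtC i = p ∧ imgC i = t p)) ×ˢ
      (univ.filter (fun k => (txtC k = p ∧ imgC k = p) ∨ txtC k = t p))) with hT1
  have hT1card : T1.card = CP * (m * ((n - m) + n)) := by
    rw [hT1, card_biUnion]
    · have hc : ∀ p ∈ P,
          ((univ.filter (fun i => txtC i = p ∧ imgC i = t p)) ×ˢ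
            (univ.filter (fun k => (txtC k = p ∧ imgC k = p) ∨ txtC k = t p))).card
          = m * ((n - m) + n) := by
        intro p hp
        rw [card_product, hpois p hp, hBcard p hp]
      rw [Finset.sum_congr rfl hc, sum_const, hP, smul_eq_mul]
    · intro p hp q hq hpq
      rw [Function.onFun_apply, Finset.disjoint_left]
      rintro z hz1 hz2
      simp only [mem_product, mem_filter] at hz1 hz2
      exact hpq (hz1.1.2.1.symm.trans hz2.1.2.1)
  have hT1mem : ∀ z : Fin N × Fin N, z ∈ T1 ↔ Q z.1 z.2 := by
    intro z
    simp only [hT1, mem_biUnion, mem_product, mem_filter, mem_univ, true_and, hQ]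
    constructor
    · rintro ⟨p, hp, ⟨h1, h2⟩, h3⟩
      subst h1
      exact ⟨hp, h2, h3⟩
    · rintro ⟨hp, hi, hk⟩
      exact ⟨txtC z.1, hp, ⟨rfl, hi⟩, hk⟩
  set T2 : Finset (Fin N × Fin N) := T1.image Prod.swap with hT2
  have hT2card : T2.card = T1.card := card_image_of_injective _ Prod.swap_injective
  have hT2mem : ∀ z : Fin N × Fin N, z ∈ T2 ↔ Q z.2 z.1 := by
    intro z
    rw [hT2, mem_image]
    constructor
    · rintro ⟨w, hw, rfl⟩
      exact (hT1mem w).1 hw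
    · intro h
      exact ⟨z.swap, (hT1mem z.swap).2 h, Prod.swap_swap z⟩
  have hdisjT : Disjoint T1 T2 := by
    rw [Finset.disjoint_left]
    intro z h1 h2
    rw [hT1mem] at h1
    rw [hT2mem] at h2
    obtain ⟨hp1, hi1, hk1⟩ := h1
    obtain ⟨hp2, hi2, hk2⟩ := h2
    rcases hk1 with ⟨ha, hb⟩ | ha
    · exact ht_ne (txtC z.2) hp2 (by rw [← hi2, hb, ha])
    · exact ht_out _ hp1 (ha ▸ hp2)
  have hsum : ((T1.card + T2.card : ℕ) : ℝ) ≤ ∑ i : Fin N, ∑ k : Fin N, g i k := by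
    have h1 : ∑ i : Fin N, ∑ k : Fin N, g i k
        = ∑ z ∈ univ ×ˢ univ, g z.1 z.2 := by
      rw [Finset.sum_product]
    rw [h1]
    have hsub : T1 ∪ T2 ⊆ univ ×ˢ univ := fun z _ => by simp [mem_product]
    have h2 : ∑ z ∈ T1 ∪ T2, g z.1 z.2 ≤ ∑ z ∈ univ ×ˢ univ, g z.1 z.2 :=
      Finset.sum_le_sum_of_subset_of_nonneg hsub (fun z _ _ => gnonneg z.1 z.2)
    have h3 : ∑ z ∈ T1 ∪ T2, g z.1 z.2 = ((T1.card + T2.card : ℕ) : ℝ) := by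
      rw [sum_union hdisjT]
      have e1 : ∑ z ∈ T1, g z.1 z.2 = (T1.card : ℝ) := by
        rw [Finset.sum_congr rfl (fun z hz => gone z.1 z.2 ((hT1mem z).1 hz)),
          sum_const, nsmul_eq_mul, mul_one]
      have e2 : ∑ z ∈ T2, g z.1 z.2 = (T2.card : ℝ) := by
        rw [Finset.sum_congr rfl
          (fun z hz => (gsymm z.1 z.2).trans (gone z.2 z.1 ((hT2mem z).1 hz))),
          sum_const, nsmul_eq_mul, mul_one]
      rw [e1, e2]
      push_cast
      ring
    linarith [h2, h3]
  have hnat : 4 * m * (n - m) * CP ≤ T1.card + T2.card := by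
    rw [hT2card, hT1card]
    nlinarith [Nat.sub_le n m]
  have hfin : (4 * (m:ℝ) * ((n - m : ℕ):ℝ) * CP) ≤ ∑ i : Fin N, ∑ k : Fin N, g i k := by
    calc (4 * (m:ℝ) * ((n - m : ℕ):ℝ) * CP)
        = ((4 * m * (n - m) * CP : ℕ) : ℝ) := by push_cast; ring
      _ ≤ ((T1.card + T2.card : ℕ) : ℝ) := by exact_mod_cast hnat
      _ ≤ _ := hsum
  have h1α : (0:ℝ) ≤ 1 - α := by linarith
  have hN2 : (0:ℝ) < (N:ℝ)^2 := by positivity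
  rw [ge_iff_le]
  calc 4 * (1 - α) * (m:ℝ) * ((n - m : ℕ):ℝ) * (CP:ℝ) / (N:ℝ)^2
      = ((1 - α) / (N:ℝ)^2) * (4 * (m:ℝ) * ((n - m : ℕ):ℝ) * CP) := by ring
    _ ≤ ((1 - α) / (N:ℝ)^2) * (∑ i : Fin N, ∑ k : Fin N, g i k) :=
        mul_le_mul_of_nonneg_left hfin (div_nonneg h1α (le_of_lt hN2))
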